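/- The intersection of D_{2p^m} with the subgroup B(FD_{2p^m}) generated by the unitary units {1 + α^i(a^j+a^{-j})(1+a^k b)} equals ⟨a⟩; in particular b ∉ B(FD_{2p^m}). -/

import Mathlib

open MonoidAlgebra DihedralGroup Finset

set_option linter.unusedSectionVars false

section NC
variable {S : Type*} [Ring S]

private lemma nc_expand (hx : ∀ x : S, x + x = 0) (y : S) (h : y * y = 0) :
    (1 + y) * (1 + y) = 1 := by
  have h1 : (1 + y) * (1 + y) = 1 + (y + y) + y * y := by noncomm_ring
  rw [h1, h, hx, add_zero, add_zero]

private lemma nc_sq (η e : S) (hcomm : e * η = η * e) (hee : e * e = 0) :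
    (η * e) * (η * e) = 0 := by
  have h1 : (η * e) * (η * e) = η * (e * η) * e := by noncomm_ring
  rw [h1, hcomm]
  have h2 : η * (η * e) * e = (η * η) * (e * e) := by noncomm_ring
  rw [h2, hee, mul_zero]

private lemma nc_step (η c e : S) (hec : e * c = c * e) (hee : e * e = 0) :
    (1 + η * e) * (1 + c * e) = 1 + (η + c) * e := by
  have h1 : (1 + η * e) * (1 + c * e) = 1 + (η + c) * e + η * (e * c) * e := by noncomm_ring
  rw [h1, hec]
  have h2 : η * (c * e) * e = (η * c) * (e * e) := by noncomm_ring
  rw [h2, hee, mul_zero, add_zero]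

private lemma nc_key (hx : ∀ x : S, x + x = 0) (g b0 bt rt : S)
    (hgg : g * g = g) (hb0g : b0 * g = g * b0)
    (hgrt : g * rt = g) (hbb : b0 * bt = rt) :
    (1 + (1 + g) * (1 + b0)) * (1 + (1 + g) * (1 + bt)) = rt := by
  have hcomm0 : (1 + b0) * (1 + g) = (1 + g) * (1 + b0) := by
    have e1 : (1 + b0) * (1 + g) = 1 + g + b0 + b0 * g := by noncomm_ring
    have e2 : (1 + g) * (1 + b0) = 1 + g + b0 + g * b0 := by noncomm_ring
    rw [e1, e2, hb0g]
  have hAB : ((1 + g) * (1 + b0)) * ((1 + g) * (1 + bt))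
      = ((1 + g) * (1 + g)) * ((1 + b0) * (1 + bt)) := by
    calc ((1 + g) * (1 + b0)) * ((1 + g) * (1 + bt))
        = (1 + g) * ((1 + b0) * (1 + g)) * (1 + bt) := by noncomm_ring
      _ = (1 + g) * ((1 + g) * (1 + b0)) * (1 + bt) := by rw [hcomm0]
      _ = ((1 + g) * (1 + g)) * ((1 + b0) * (1 + bt)) := by noncomm_ring
  have hηη : (1 + g) * (1 + g) = 1 + g := by
    have e1 : (1 + g) * (1 + g) = 1 + g + (g + g * g) := by noncomm_ring
    rw [e1, hgg, hx, add_zero]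
  have hb : (1 + b0) * (1 + bt) = 1 + bt + b0 + rt := by
    have e1 : (1 + b0) * (1 + bt) = 1 + bt + b0 + b0 * bt := by noncomm_ring
    rw [e1, hbb]
  have expand : (1 + (1 + g) * (1 + b0)) * (1 + (1 + g) * (1 + bt))
      = 1 + ((1 + g) * (1 + b0) + (1 + g) * (1 + bt))
        + ((1 + g) * (1 + b0)) * ((1 + g) * (1 + bt)) := by noncomm_ring
  rw [expand, hAB, hηη, hb]
  have collect : 1 + ((1 + g) * (1 + b0) + (1 + g) * (1 + bt)) + (1 + g) * (1 + bt + b0 + rt)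
      = 1 + (1 + g) * ((1 + b0) + ((1 + bt) + (1 + bt + b0 + rt))) := by noncomm_ring
  rw [collect]
  have hin : (1 + b0) + ((1 + bt) + (1 + bt + b0 + rt))
      = 1 + rt + (1 + 1) + (b0 + b0) + (bt + bt) := by abel
  rw [hin, hx, hx, hx, add_zero, add_zero, add_zero]
  have e3 : 1 + (1 + g) * (1 + rt) = 1 + 1 + rt + (g + g * rt) := by noncomm_ring
  rw [e3, hgrt, hx, hx, add_zero, zero_add]

private lemma nc_invsq (hx : ∀ x : S, x + x = 0) (s : S) (hss : s * s = 1) :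
    (1 + s) * (1 + s) = 0 := by
  have h1 : (1 + s) * (1 + s) = 1 + s * s + (s + s) := by noncomm_ring
  rw [h1, hss, hx, hx, add_zero]

end NC

section Dih
variable (F : Type*) [Field F] [CharP F 2] (N : ℕ) [NeZero N]

private lemma addself {M : Type*} [AddCommMonoid M] [Module F M] (x : M) : x + x = 0 := by
  have h2 : (2 : F) = 0 := CharTwo.two_eq_zero
  have h := two_smul F x
  rw [h2, zero_smul] at h
  exact h.symm

private noncomputable def ghat : MonoidAlgebra F (DihedralGroup N) :=
  ∑ v : ZMod N, of F (DihedralGroup N) (r v)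

private lemma ghat_mul_r (v : ZMod N) :
    ghat F N * of F (DihedralGroup N) (r v) = ghat F N := by
  unfold ghat
  rw [Finset.sum_mul]
  simp only [← map_mul, r_mul_r]
  exact Fintype.sum_equiv (Equiv.addRight v) _ _ fun x => rfl

private lemma r_mul_ghat (v : ZMod N) :
    of F (DihedralGroup N) (r v) * ghat F N = ghat F N := by
  unfold ghat
  rw [Finset.mul_sum]
  simp only [← map_mul, r_mul_r]
  exact Fintype.sum_equiv (Equiv.addLeft v) _ _ fun x => rfl

private lemma sr_comm_ghat (v : ZMod N) :
    of F (DihedralGroup N) (sr v) * ghat F N = ghat F N * of F (DihedralGroup N) (sr v) := by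
  unfold ghat
  rw [Finset.mul_sum, Finset.sum_mul]
  simp only [← map_mul, sr_mul_r, r_mul_sr]
  exact Fintype.sum_equiv ((Equiv.addLeft v).trans (Equiv.subLeft v).symm) _ _ (by
    intro x
    congr 1
    simp [Equiv.subLeft])

private lemma ghat_sq (hodd : Odd N) : ghat F N * ghat F N = ghat F N := by
  obtain ⟨k, hk⟩ := hodd
  have expand : ∀ x : MonoidAlgebra F (DihedralGroup N),
      ghat F N * x = ∑ v : ZMod N, of F (DihedralGroup N) (r v) * x := by
    intro x
    unfold ghat
    rw [Finset.sum_mul]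
  rw [expand, Finset.sum_congr rfl fun v _ => r_mul_ghat F N v, Finset.sum_const,
    Finset.card_univ, ZMod.card]
  have hcast : N • ghat F N = (2 * k + 1) • ghat F N :=
    congrArg (fun n => n • ghat F N) hk
  rw [hcast, succ_nsmul, two_mul, add_nsmul, addself F, zero_add]

/-- `ghat` as a sum over `Finset.range N`. -/
private lemma ghat_range : ghat F N = ∑ j ∈ Finset.range N, of F (DihedralGroup N) (r (j : ZMod N)) := by
  unfold ghat
  refine Finset.sum_nbij' (fun v => v.val) (fun j => (j : ZMod N)) ?_ ?_ ?_ ?_ ?_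
  · intro v _; exact Finset.mem_range.mpr (ZMod.val_lt v)
  · intro j _; exact Finset.mem_univ _
  · intro v _; exact ZMod.natCast_rightInverse v
  · intro j hj; exact ZMod.val_cast_of_lt (Finset.mem_range.mp hj)
  · intro v _; rw [ZMod.natCast_rightInverse v]


private noncomputable def cC (j : ℕ) : MonoidAlgebra F (DihedralGroup N) :=
  of F (DihedralGroup N) (r (j : ZMod N)) + of F (DihedralGroup N) (r (-(j : ZMod N)))

private noncomputable def eE (k : ℕ) : MonoidAlgebra F (DihedralGroup N) :=
  1 + of F (DihedralGroup N) (r (k : ZMod N) * sr 0)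

private noncomputable def etaP (J : ℕ) : MonoidAlgebra F (DihedralGroup N) :=
  ∑ j ∈ Finset.Icc 1 J, cC F N j

private lemma eE_comm_cC (k j : ℕ) :
    eE F N k * cC F N j = cC F N j * eE F N k := by
  unfold eE cC
  rw [r_mul_sr]
  simp only [add_mul, mul_add, one_mul, mul_one, ← map_mul, sr_mul_r, r_mul_sr, sub_neg_eq_add]
  abel_nf

private lemma eE_sq (k : ℕ) : eE F N k * eE F N k = 0 := by
  unfold eE
  refine nc_invsq (addself F) _ ?_
  rw [← map_mul, r_mul_sr, sr_mul_self, map_one]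

private lemma eE_comm_etaP (k J : ℕ) :
    eE F N k * etaP F N J = etaP F N J * eE F N k := by
  unfold etaP
  rw [Finset.mul_sum, Finset.sum_mul]
  exact Finset.sum_congr rfl fun j _ => eE_comm_cC F N k j

private lemma etaP_eE_sq (k J : ℕ) :
    (etaP F N J * eE F N k) * (etaP F N J * eE F N k) = 0 :=
  nc_sq _ _ (eE_comm_etaP F N k J) (eE_sq F N k)

private lemma cC_eE_sq (j k : ℕ) :
    (cC F N j * eE F N k) * (cC F N j * eE F N k) = 0 :=
  nc_sq _ _ (eE_comm_cC F N k j) (eE_sq F N k)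

private noncomputable def uW (k J : ℕ) : (MonoidAlgebra F (DihedralGroup N))ˣ :=
  ⟨1 + etaP F N J * eE F N k, 1 + etaP F N J * eE F N k,
    nc_expand (addself F) _ (etaP_eE_sq F N k J),
    nc_expand (addself F) _ (etaP_eE_sq F N k J)⟩

private noncomputable def uGen (j k : ℕ) : (MonoidAlgebra F (DihedralGroup N))ˣ :=
  ⟨1 + cC F N j * eE F N k, 1 + cC F N j * eE F N k,
    nc_expand (addself F) _ (cC_eE_sq F N j k),
    nc_expand (addself F) _ (cC_eE_sq F N j k)⟩

private lemma uW_val (k J : ℕ) : (uW F N k J : MonoidAlgebra F (DihedralGroup N))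
    = 1 + etaP F N J * eE F N k := rfl

private lemma uGen_val (j k : ℕ) : (uGen F N j k : MonoidAlgebra F (DihedralGroup N))
    = 1 + cC F N j * eE F N k := rfl

private lemma uW_zero (k : ℕ) : uW F N k 0 = 1 := by
  refine Units.ext ?_
  rw [uW_val]
  unfold etaP
  simp

private lemma uW_succ (k J : ℕ) : uW F N k (J + 1) = uW F N k J * uGen F N (J + 1) k := by
  refine Units.ext ?_
  rw [Units.val_mul, uW_val, uW_val, uGen_val,
    nc_step _ _ _ (eE_comm_cC F N k (J + 1)) (eE_sq F N k)]
  unfold etaP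
  rw [Finset.sum_Icc_succ_top (by omega)]

private lemma bridge (hodd : Odd N) : etaP F N ((N - 1) / 2) = 1 + ghat F N := by
  obtain ⟨h, hh⟩ := hodd
  have hhalf : (N - 1) / 2 = h := by omega
  rw [hhalf]
  unfold etaP cC
  rw [Finset.sum_add_distrib]
  have hS2 : (∑ j ∈ Finset.Icc 1 h, of F (DihedralGroup N) (r (-(j : ZMod N))))
      = ∑ j ∈ Finset.Icc (h + 1) (2 * h), of F (DihedralGroup N) (r (j : ZMod N)) := by
    refine Finset.sum_nbij' (fun j => N - j) (fun j => N - j) ?_ ?_ ?_ ?_ ?_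
    · intro a ha
      simp only [Finset.mem_Icc] at ha ⊢
      omega
    · intro a ha
      simp only [Finset.mem_Icc] at ha ⊢
      omega
    · intro a ha
      simp only [Finset.mem_Icc] at ha
      omega
    · intro a ha
      simp only [Finset.mem_Icc] at ha
      omega
    · intro a ha
      simp only [Finset.mem_Icc] at ha
      congr 1
      have : ((N - a : ℕ) : ZMod N) = (N : ZMod N) - (a : ZMod N) := by
        push_cast [Nat.cast_sub (by omega : a ≤ N)]
        ring
      rw [this, ZMod.natCast_self, zero_sub]
  rw [hS2]
  have hS12 : (∑ j ∈ Finset.Icc 1 h, of F (DihedralGroup N) (r (j : ZMod N)))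
      + ∑ j ∈ Finset.Icc (h + 1) (2 * h), of F (DihedralGroup N) (r (j : ZMod N))
      = ∑ j ∈ Finset.Icc 1 (2 * h), of F (DihedralGroup N) (r (j : ZMod N)) := by
    rw [← Finset.Ico_add_one_right_eq_Icc 1 h, ← Finset.Ico_add_one_right_eq_Icc (h + 1) (2 * h),
      ← Finset.Ico_add_one_right_eq_Icc 1 (2 * h)]
    exact Finset.sum_Ico_consecutive _ (by omega) (by omega)
  rw [hS12, ghat_range]
  have hr : Finset.range N = insert 0 (Finset.Icc 1 (2 * h)) := by
    ext x
    simp only [Finset.mem_range, Finset.mem_insert, Finset.mem_Icc]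
    omega
  rw [hr, Finset.sum_insert (by simp)]
  rw [Nat.cast_zero, show of F (DihedralGroup N) (r 0) = 1 by rw [← DihedralGroup.one_def, map_one]]
  have h11 : (1 : MonoidAlgebra F (DihedralGroup N)) + 1 = 0 := addself F 1
  rw [← add_assoc, h11, zero_add]

private lemma final_id (hodd : Odd N) (t : ZMod N) :
    (1 + etaP F N ((N - 1) / 2) * eE F N 0) *
      (1 + etaP F N ((N - 1) / 2) * eE F N (-t).val) =
    of F (DihedralGroup N) (r t) := by
  rw [bridge F N hodd]
  have he0 : eE F N 0 = 1 + of F (DihedralGroup N) (sr 0) := by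
    unfold eE
    rw [r_mul_sr, Nat.cast_zero, sub_zero]
  have het : eE F N (-t).val = 1 + of F (DihedralGroup N) (sr t) := by
    unfold eE
    rw [r_mul_sr, show (((-t).val : ℕ) : ZMod N) = -t from ZMod.natCast_rightInverse _,
      zero_sub, neg_neg]
  rw [he0, het]
  refine nc_key (addself F) _ _ _ _ (ghat_sq F N hodd) (sr_comm_ghat F N 0) ?_ ?_
  · exact ghat_mul_r F N t
  · rw [← map_mul, sr_mul_sr, sub_zero]

end Dih

section Sgn
variable (N : ℕ)

private def sgnFun : DihedralGroup N → Multiplicative (ZMod 2)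
  | .r _ => 1
  | .sr _ => Multiplicative.ofAdd 1

private def sgn : DihedralGroup N →* Multiplicative (ZMod 2) where
  toFun := sgnFun N
  map_one' := rfl
  map_mul' := by
    rintro (x | x) (y | y) <;>
      simp only [r_mul_r, r_mul_sr, sr_mul_r, sr_mul_sr, sgnFun] <;> decide

@[simp] private lemma sgn_r (x : ZMod N) : sgn N (r x) = 1 := rfl

@[simp] private lemma sgn_sr (x : ZMod N) : sgn N (sr x) = Multiplicative.ofAdd 1 := rfl

end Sgn

/-- The intersection of `D_{2p^m}` with the subgroup `B(F D_{2p^m})` of `U(F D_{2p^m})`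
generated by the unitary units `{1 + α^i(a^j + a^{-j})(1 + a^k b)}` equals `⟨a⟩`;
in particular `b ∉ B(F D_{2p^m})`. -/
theorem dihedral_inter_B_eq_powers_a (p n m : ℕ) (hp : p.Prime) (hpodd : Odd p)
    (hn : 1 ≤ n) (hm : 1 ≤ m) [NeZero (p ^ m)]
    (F : Type*) [Field F] [Fintype F] [CharP F 2] (hF : Fintype.card F = 2 ^ n)
    (α : F) (hα : Subring.closure ({α} : Set F) = ⊤)
    (BSet : Set (MonoidAlgebra F (DihedralGroup (p ^ m)))ˣ)
    (hBSet : BSet = {u : (MonoidAlgebra F (DihedralGroup (p ^ m)))ˣ | ∃ i j k : ℕ, i ≤ n - 1 ∧ 1 ≤ j ∧ j ≤ (p ^ m - 1) / 2 ∧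
      k ≤ p ^ m - 1 ∧
      (u : MonoidAlgebra F (DihedralGroup (p ^ m))) = 1 + α ^ i •
        ((MonoidAlgebra.of F (DihedralGroup (p ^ m)) (DihedralGroup.r (j : ZMod (p ^ m))) +
          MonoidAlgebra.of F (DihedralGroup (p ^ m)) (DihedralGroup.r (-(j : ZMod (p ^ m))))) *
         (1 + MonoidAlgebra.of F (DihedralGroup (p ^ m))
            (DihedralGroup.r (k : ZMod (p ^ m)) * DihedralGroup.sr 0)))}) :
    ∀ g : DihedralGroup (p ^ m),
      (∃ u ∈ Subgroup.closure BSet,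
        (u : MonoidAlgebra F (DihedralGroup (p ^ m))) =
          MonoidAlgebra.of F (DihedralGroup (p ^ m)) g) ↔
      g ∈ Subgroup.zpowers (DihedralGroup.r (1 : ZMod (p ^ m))) := by
  intro g
  have hodd : Odd (p ^ m) := hpodd.pow
  have hNpos : 0 < p ^ m := Nat.pos_of_ne_zero (NeZero.ne _)
  constructor
  · rintro ⟨u, hu, huv⟩
    set A := mapDomainAlgHom F F (sgn (p ^ m)) with hA
    set Φ : MonoidAlgebra F (DihedralGroup (p ^ m)) →*
        MonoidAlgebra F (Multiplicative (ZMod 2)) := A.toRingHom.toMonoidHom with hΦ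
    have hof : ∀ w : DihedralGroup (p ^ m),
        A (of F (DihedralGroup (p ^ m)) w) =
          MonoidAlgebra.single (sgn (p ^ m) w) (1 : F) := by
      intro w
      simp [hA, mapDomainAlgHom]
    have hker : Subgroup.closure BSet ≤ MonoidHom.ker (Units.map Φ) := by
      rw [Subgroup.closure_le]
      intro v hv
      rw [hBSet] at hv
      obtain ⟨i, j, k, -, -, -, -, hval⟩ := hv
      simp only [SetLike.mem_coe, MonoidHom.mem_ker]
      refine Units.ext ?_
      rw [Units.coe_map, Units.val_one]
      show A _ = 1
      rw [hval, map_add, map_one, map_smul, map_mul, map_add, hof, hof, sgn_r, sgn_r]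
      rw [show (MonoidAlgebra.single (1 : Multiplicative (ZMod 2)) (1 : F) : MonoidAlgebra F (Multiplicative (ZMod 2)))
          + MonoidAlgebra.single 1 1 = 0 from addself F _, zero_mul, smul_zero, add_zero]
    have hu1 : Units.map Φ u = 1 := hker hu
    have hval1 : A (of F (DihedralGroup (p ^ m)) g) = 1 := by
      have h := congrArg Units.val hu1
      rw [Units.coe_map, Units.val_one, huv] at h
      exact h
    rw [hof] at hval1
    have hsg : sgn (p ^ m) g = 1 := by
      rw [MonoidAlgebra.one_def] at hval1
      exact ((MonoidAlgebra.single_left_inj (one_ne_zero (α := F))).mp hval1)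
    cases g with
    | r x =>
      exact Subgroup.mem_zpowers_iff.mpr
        ⟨(x.val : ℤ), by rw [zpow_natCast, r_one_pow, ZMod.natCast_rightInverse x]⟩
    | sr x =>
      rw [sgn_sr] at hsg
      exact absurd hsg (by decide)
  · intro hg
    obtain ⟨z, hz⟩ := Subgroup.mem_zpowers_iff.mp hg
    obtain ⟨t, rfl⟩ : ∃ t : ZMod (p ^ m), g = r t := by
      obtain ⟨n0, rfl | rfl⟩ := z.eq_nat_or_neg
      · exact ⟨(n0 : ZMod (p ^ m)), by rw [← hz, zpow_natCast, r_one_pow]⟩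
      · refine ⟨-(n0 : ZMod (p ^ m)), ?_⟩
        rw [← hz, zpow_neg, zpow_natCast, r_one_pow]
        rfl
    have memW : ∀ J, J ≤ (p ^ m - 1) / 2 → ∀ k, k ≤ p ^ m - 1 →
        uW F (p ^ m) k J ∈ Subgroup.closure BSet := by
      intro J
      induction J with
      | zero =>
        intro _ k _
        rw [uW_zero]
        exact one_mem _
      | succ J ih =>
        intro hJ k hk
        rw [uW_succ]
        refine mul_mem (ih (by omega) k hk) (Subgroup.subset_closure ?_)
        rw [hBSet]
        refine ⟨0, J + 1, k, Nat.zero_le _, Nat.le_add_left _ _, hJ, hk, ?_⟩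
        rw [pow_zero, one_smul, uGen_val]
        rfl
    refine ⟨uW F (p ^ m) 0 ((p ^ m - 1) / 2) * uW F (p ^ m) ((-t).val) ((p ^ m - 1) / 2),
      mul_mem (memW _ le_rfl 0 (Nat.zero_le _))
        (memW _ le_rfl _ (by have := ZMod.val_lt (-t); omega)), ?_⟩
    rw [Units.val_mul, uW_val, uW_val]
    exact final_id F (p ^ m) hodd t
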